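/- arXiv:1407.1996 — 3 statements merged into one kernel-verified Lean document; each statement's English description precedes it below -/
import Mathlib

section
/- Let G be a one-counter graph and F ⊆ V_∃. A positional strategy for Adam assigns to every arena vertex (v,c) with v ∉ V_∃ a single outgoing edge, depending only on (v,c). Fix a positional strategy σ for Adam and a vertex (q_0,0) of the arena. If Eve has a strategy such that every play from (q_0,0) consistent with both her strategy and σ visits vertices of F × {0} at least |F|+1 times, then Eve has a strategy such that the play from (q_0,0) consistent with it and σ visits some fixed vertex (v,0) with v ∈ F infinitely often (in particular, it visits F × {0} infinitely often). -/
/-!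
One-counter graphs and the games played on their infinite arenas.

A one-counter graph is a tuple `(V, V_∃, E, E_0, E_{≠0}, q_0, w)`.  We bundle the
weight function into the edge set: an edge of `E` is a triple `(source, weight, target)`
(this also allows parallel edges of different weights).  The arena has vertex set
`Q × ℤ`; Eve owns the vertices whose state lies in `Eve`, Adam owns the rest.
-/

/-- A one-counter graph: states `Q`, Eve's states `Eve` (the remaining states are
Adam's), weighted edges `E ⊆ Q × ℤ × Q`, edges `E0` activated only when the counter
is `0`, edges `Ene` activated only when the counter is nonzero, and initial state `q0`. -/
structure OCG (Q : Type) where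
  Eve : Set Q
  E : Set (Q × ℤ × Q)
  E0 : Set (Q × Q)
  Ene : Set (Q × Q)
  q0 : Q

namespace OCG

variable {Q : Type}

/-- The edge relation of the infinite arena on `Q × ℤ`. -/
def Step (G : OCG Q) (p q : Q × ℤ) : Prop :=
  (∃ c : ℤ, (p.1, c, q.1) ∈ G.E ∧ q.2 = p.2 + c) ∨
  ((p.1, q.1) ∈ G.E0 ∧ p.2 = 0 ∧ q.2 = 0) ∨
  ((p.1, q.1) ∈ G.Ene ∧ p.2 ≠ 0 ∧ q.2 = p.2)

/-- A strategy for Eve: given the strict past history (earliest vertex first) and the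
current vertex, choose a next vertex. -/
def EStrat (Q : Type) : Type := List (Q × ℤ) → (Q × ℤ) → (Q × ℤ)

/-- An Eve strategy is legal if at every Eve vertex that has a successor it chooses
an actual successor. -/
def EStrat.Legal (G : OCG Q) (σ : EStrat Q) : Prop :=
  ∀ h p, p.1 ∈ G.Eve → (∃ q, G.Step p q) → G.Step p (σ h p)

/-- The history of a (partial) play strictly before step `n`. -/
def hist (π : ℕ → Option (Q × ℤ)) (n : ℕ) : List (Q × ℤ) :=
  (List.range n).filterMap π

/-- `IsPlay G σ v π` : `π` is a maximal play of the arena of `G` from `v` in which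
Eve plays according to `σ` (at Adam's vertices any successor may be chosen).
`π n = none` signifies that the (finite, maximal) play has already ended. -/
def IsPlay (G : OCG Q) (σ : EStrat Q) (v : Q × ℤ) (π : ℕ → Option (Q × ℤ)) : Prop :=
  π 0 = some v ∧ ∀ n,
    (π n = none → π (n + 1) = none) ∧
    ∀ p, π n = some p →
      ((¬ ∃ q, G.Step p q) → π (n + 1) = none) ∧
      ((∃ q, G.Step p q) → ∃ q, π (n + 1) = some q ∧ G.Step p q ∧
        (p.1 ∈ G.Eve → q = σ (hist π n) p))

/-- Eve has a winning strategy for the reachability game on `G` with target set `F`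
and target value `t`, from the arena vertex `v`: some legal strategy of hers ensures
that every consistent maximal play visits a vertex `(f, t)` with `f ∈ F`. -/
def WinsReach (G : OCG Q) (F : Set Q) (t : ℤ) (v : Q × ℤ) : Prop :=
  ∃ σ : EStrat Q, σ.Legal G ∧
    ∀ π, IsPlay G σ v π → ∃ n p, π n = some p ∧ p.1 ∈ F ∧ p.2 = t

end OCG

open Sum OCG

namespace OCG

/-- A positional strategy for Adam: a single choice of successor for every arena
vertex, depending only on the vertex. -/
def AStratPos (Q : Type) : Type := (Q × ℤ) → (Q × ℤ)

/-- A positional Adam strategy is legal if at every Adam vertex that has a successor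
it chooses an actual successor. -/
def AStratPos.Legal {Q : Type} (G : OCG Q) (τ : AStratPos Q) : Prop :=
  ∀ p, p.1 ∉ G.Eve → (∃ q, G.Step p q) → G.Step p (τ p)

/-- `IsPlayBoth G σ τ v π` : `π` is a maximal play of the arena of `G` from `v` in
which Eve plays according to the strategy `σ` and Adam plays according to the
positional strategy `τ`. -/
def IsPlayBoth {Q : Type} (G : OCG Q) (σ : EStrat Q) (τ : AStratPos Q) (v : Q × ℤ)
    (π : ℕ → Option (Q × ℤ)) : Prop :=
  π 0 = some v ∧ ∀ n,
    (π n = none → π (n + 1) = none) ∧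
    ∀ p, π n = some p →
      ((¬ ∃ q, G.Step p q) → π (n + 1) = none) ∧
      ((∃ q, G.Step p q) → ∃ q, π (n + 1) = some q ∧ G.Step p q ∧
        (p.1 ∈ G.Eve → q = σ (hist π n) p) ∧ (p.1 ∉ G.Eve → q = τ p))

end OCG

namespace OCG
variable {Q : Type}

-- ===== auxiliary development =====

lemma hist_succ (π : ℕ → Option (Q × ℤ)) (n : ℕ) :
    hist π (n + 1) = hist π n ++ (π n).toList := by
  rw [hist, hist, List.range_succ, List.filterMap_append]
  cases h : π n <;> simp [h]

lemma none_prop {G : OCG Q} {σ : EStrat Q} {τ : AStratPos Q} {v : Q × ℤ}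
    {π : ℕ → Option (Q × ℤ)} (h : IsPlayBoth G σ τ v π) {n m : ℕ} (hnm : n ≤ m)
    (hn : π n = none) : π m = none := by
  induction m, hnm using Nat.le_induction with
  | base => exact hn
  | succ m hm ih => exact (h.2 m).1 ih

open Classical in
noncomputable def runAux (G : OCG Q) (σ : EStrat Q) (τ : AStratPos Q) (v : Q × ℤ) :
    ℕ → List (Q × ℤ) × Option (Q × ℤ)
  | 0 => ([], some v)
  | n + 1 =>
    match runAux G σ τ v n with
    | (h, none) => (h, none)
    | (h, some p) =>
        (h ++ [p],
          if ∃ q, G.Step p q then some (if p.1 ∈ G.Eve then σ h p else τ p) else none)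

noncomputable def playF (G : OCG Q) (σ : EStrat Q) (τ : AStratPos Q) (v : Q × ℤ)
    (n : ℕ) : Option (Q × ℤ) := (runAux G σ τ v n).2

lemma hist_playF (G : OCG Q) (σ : EStrat Q) (τ : AStratPos Q) (v : Q × ℤ) (n : ℕ) :
    hist (playF G σ τ v) n = (runAux G σ τ v n).1 := by
  induction n with
  | zero => simp [hist, runAux]
  | succ n ih =>
    rw [hist_succ, ih]
    rcases hr : runAux G σ τ v n with ⟨h, o⟩
    cases o with
    | none => simp [playF, runAux, hr]
    | some p => simp [playF, runAux, hr]

lemma playF_isPlayBoth (G : OCG Q) {σ : EStrat Q} {τ : AStratPos Q} (v : Q × ℤ)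
    (hσ : σ.Legal G) (hτ : τ.Legal G) :
    IsPlayBoth G σ τ v (playF G σ τ v) := by
  classical
  constructor
  · simp [playF, runAux]
  intro n
  rcases hr : runAux G σ τ v n with ⟨h, o⟩
  cases o with
  | none =>
    constructor
    · intro _; simp [playF, runAux, hr]
    · intro p hp; rw [playF, hr] at hp; simp at hp
  | some p =>
    constructor
    · intro hn; rw [playF, hr] at hn; simp at hn
    · intro p' hp'
      rw [playF, hr] at hp'
      simp only [Option.some.injEq] at hp'
      subst hp'
      constructor
      · intro hns
        simp [playF, runAux, hr, hns]
      · intro hs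
        refine ⟨if p.1 ∈ G.Eve then σ h p else τ p, ?_, ?_, ?_, ?_⟩
        · simp [playF, runAux, hr, hs]
        · by_cases he : p.1 ∈ G.Eve
          · simpa [he] using hσ h p he hs
          · simpa [he] using hτ p he hs
        · intro he; rw [hist_playF, hr]; simp [he]
        · intro he; simp [he]

open Classical in
/-- Realization: any infinite trace consistent with `τ` at Adam's vertices can be
forced by a legal Eve strategy. -/
lemma realize (G : OCG Q) (τ : AStratPos Q) (ρ : ℕ → Q × ℤ)
    (hstep : ∀ n, G.Step (ρ n) (ρ (n + 1)))
    (hadam : ∀ n, (ρ n).1 ∉ G.Eve → ρ (n + 1) = τ (ρ n)) :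
    ∃ σ : EStrat Q, σ.Legal G ∧
      ∀ π, IsPlayBoth G σ τ (ρ 0) π → ∀ n, π n = some (ρ n) := by
  refine ⟨fun h p =>
    if G.Step p (ρ (h.length + 1)) then ρ (h.length + 1)
    else if he : ∃ q, G.Step p q then he.choose else p, ?_, ?_⟩
  · intro h p _ hs
    by_cases h1 : G.Step p (ρ (h.length + 1))
    · simpa [h1]
    · simpa [h1, hs] using hs.choose_spec
  · intro π hπ n
    have key : ∀ n, π n = some (ρ n) ∧ (hist π n).length = n := by
      intro n
      induction n with
      | zero => exact ⟨hπ.1, by simp [hist]⟩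
      | succ n ih =>
        have hlen : (hist π (n + 1)).length = n + 1 := by
          rw [hist_succ, ih.1]; simp [ih.2]
        refine ⟨?_, hlen⟩
        obtain ⟨q, hq, _, hEve, hAdam⟩ :=
          ((hπ.2 n).2 (ρ n) ih.1).2 ⟨_, hstep n⟩
        by_cases he : (ρ n).1 ∈ G.Eve
        · have hq' := hEve he
          simp only [ih.2] at hq'
          rw [hq, hq', if_pos (hstep n)]
        · rw [hq, hAdam he, ← hadam n he]
    exact (key n).1

end OCG

/-- Against a fixed legal positional strategy `τ` of Adam: if Eve has a (legal)
strategy guaranteeing that every play from `(q0, 0)` consistent with her strategy and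
with `τ` visits `F × {0}` at least `|F| + 1` times, then she has a (legal) strategy
guaranteeing that every such play visits some fixed vertex `(v, 0)`, `v ∈ F`,
infinitely often. -/
theorem pumping_buchi {Q : Type} (G : OCG Q) (F : Finset Q) (hF : ↑F ⊆ G.Eve)
    (q0 : Q) (τ : AStratPos Q) (hτ : τ.Legal G)
    (hwin : ∃ σ : EStrat Q, σ.Legal G ∧
      ∀ π, IsPlayBoth G σ τ (q0, 0) π →
        ∃ f : Fin (F.card + 1) → ℕ, StrictMono f ∧
          ∀ k, ∃ p, π (f k) = some p ∧ p.1 ∈ F ∧ p.2 = 0) :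
    ∃ v ∈ F, ∃ σ : EStrat Q, σ.Legal G ∧
      ∀ π, IsPlayBoth G σ τ (q0, 0) π →
        ∀ N, ∃ n ≥ N, π n = some (v, 0) := by
  classical
  obtain ⟨σ, hσleg, hσ⟩ := hwin
  set π₀ := playF G σ τ (q0, 0) with hπ₀def
  have hP : IsPlayBoth G σ τ (q0, 0) π₀ := playF_isPlayBoth G _ hσleg hτ
  obtain ⟨f, hfmono, hvis⟩ := hσ π₀ hP
  choose p hp hpF hpc using hvis
  obtain ⟨i, j, hij, heq⟩ : ∃ i j : Fin (F.card + 1), f i < f j ∧ (p i).1 = (p j).1 := by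
    obtain ⟨i, j, hne, hg⟩ := Fintype.exists_ne_map_eq_of_card_lt
      (fun k => (⟨(p k).1, hpF k⟩ : {x // x ∈ F})) (by simp)
    rcases hne.lt_or_gt with h | h
    · exact ⟨i, j, hfmono h, congrArg Subtype.val hg⟩
    · exact ⟨j, i, hfmono h, (congrArg Subtype.val hg).symm⟩
  set v := (p i).1 with hv
  set a := f i with ha
  set b := f j with hb
  have hpi : π₀ a = some (v, 0) := by
    rw [hp i]; congr 1; exact Prod.ext_iff.mpr ⟨rfl, hpc i⟩
  have hpj : π₀ b = some (v, 0) := by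
    rw [hp j]; congr 1; exact Prod.ext_iff.mpr ⟨heq.symm, hpc j⟩
  set u : ℕ → Q × ℤ := fun n => (π₀ n).getD (v, 0) with hudef
  have hu : ∀ n ≤ b, π₀ n = some (u n) := by
    intro n hn
    rcases h : π₀ n with _ | r
    · exact absurd (none_prop hP hn h) (by rw [hpj]; simp)
    · simp [hudef, h]
  have hstep0 : ∀ n < b, G.Step (u n) (u (n + 1)) ∧
      ((u n).1 ∉ G.Eve → u (n + 1) = τ (u n)) := by
    intro n hn
    have h1 := hu n hn.le
    have h2 := hu (n + 1) hn
    have hcl := (hP.2 n).2 (u n) h1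
    have hs : ∃ q, G.Step (u n) q := by
      by_contra hns
      rw [hcl.1 hns] at h2; exact absurd h2 (by simp)
    obtain ⟨q, hq, hstep, _, hAdam⟩ := hcl.2 hs
    rw [h2] at hq
    obtain rfl : u (n + 1) = q := Option.some_injective _ hq
    exact ⟨hstep, hAdam⟩
  set T := b - a with hTdef
  have hT : 0 < T := by omega
  have hua : u a = (v, 0) :=
    Option.some_injective _ ((hu a hij.le).symm.trans hpi)
  have hub : u b = (v, 0) :=
    Option.some_injective _ ((hu b le_rfl).symm.trans hpj)
  have hu0 : u 0 = (q0, 0) :=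
    Option.some_injective _ ((hu 0 (Nat.zero_le _)).symm.trans hP.1)
  set ρ : ℕ → Q × ℤ := fun n => if n < a then u n else u (a + (n - a) % T) with hρdef
  have hρa : ∀ n, ¬ n < a → ρ n = u (a + (n - a) % T) := by
    intro n h; simp [hρdef, h]
  have hρ0 : ρ 0 = (q0, 0) := by
    by_cases h : 0 < a
    · simp [hρdef, h, hu0]
    · have : a = 0 := by omega
      simp [hρdef, this, hu0]
  have hwrap : u b = u a := by rw [hua, hub]
  have claim : ∀ n, ∃ m, m < b ∧ ρ n = u m ∧ ρ (n + 1) = u (m + 1) := by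
    intro n
    by_cases hna : n < a
    · refine ⟨n, hna.trans hij, by simp [hρdef, hna], ?_⟩
      by_cases h2 : n + 1 < a
      · simp [hρdef, h2]
      · have he : n + 1 = a := by omega
        simp [hρdef, h2, he]
    · set m := (n - a) % T with hm
      have hmT : m < T := Nat.mod_lt _ hT
      have ham : a + m < b := by omega
      have hn1 : ¬ n + 1 < a := by omega
      have hmod : (n + 1 - a) % T = if m + 1 = T then 0 else m + 1 := by
        have hdm := Nat.div_add_mod (n - a) T
        have h1 : n + 1 - a = T * ((n - a) / T) + (m + 1) := by omega
        by_cases hc : m + 1 = T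
        · rw [if_pos hc, h1, hc, ← Nat.mul_succ]
          exact Nat.mul_mod_right _ _
        · rw [if_neg hc, h1, Nat.mul_add_mod]
          exact Nat.mod_eq_of_lt (by omega)
      refine ⟨a + m, ham, hρa n hna, ?_⟩
      rw [hρa (n + 1) hn1, hmod]
      by_cases hc : m + 1 = T
      · rw [if_pos hc]
        have hab : a + m + 1 = b := by omega
        rw [Nat.add_zero, hab]
        exact hwrap.symm
      · rw [if_neg hc, ← Nat.add_assoc]
  have hsteps : ∀ n, G.Step (ρ n) (ρ (n + 1)) := by
    intro n
    obtain ⟨m, hm, h1, h2⟩ := claim n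
    rw [h1, h2]; exact (hstep0 m hm).1
  have hadam : ∀ n, (ρ n).1 ∉ G.Eve → ρ (n + 1) = τ (ρ n) := by
    intro n hn
    obtain ⟨m, hm, h1, h2⟩ := claim n
    rw [h1] at hn
    rw [h1, h2]; exact (hstep0 m hm).2 hn
  obtain ⟨σ', hleg, hplays⟩ := realize G τ ρ hsteps hadam
  refine ⟨v, hpF i, σ', hleg, ?_⟩
  intro π hπ N
  have hπ' : IsPlayBoth G σ' τ (ρ 0) π := by rw [hρ0]; exact hπ
  refine ⟨a + N * T, ?_, ?_⟩
  · have : N ≤ N * T := Nat.le_mul_of_pos_right N hT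
    omega
  · rw [hplays π hπ' (a + N * T), hρa _ (by omega)]
    have h0 : (a + N * T - a) % T = 0 := by
      rw [Nat.add_sub_cancel_left]
      exact Nat.mul_mod_left _ _
    rw [h0, Nat.add_zero, hua]
end

section
/- Let n ≥ 5 and let M ≥ 1 be an integer such that every odd integer m with 0 < m < 2^n divides M. Then, as real numbers, M ≥ 2^(2^n/n − 1). -/
lemma sq_le_two_pow : ∀ n : ℕ, 5 ≤ n → n ^ 2 ≤ 2 ^ n := by
  intro n hn
  induction n with
  | zero => omega
  | succ k ih =>
    rcases Nat.lt_or_ge k 5 with hk | hk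
    · have : k = 4 := by omega
      subst this; norm_num
    · have h1 := ih hk
      have h2 : 2 * k + 1 ≤ k ^ 2 := by nlinarith
      have : (k + 1) ^ 2 = k ^ 2 + (2 * k + 1) := by ring
      calc (k+1)^2 = k^2 + (2*k+1) := by ring
        _ ≤ 2 ^ k + 2 ^ k := by omega
        _ = 2 ^ (k+1) := by ring

/-- If `n ≥ 5` and `M ≥ 1` is divisible by every odd `m` with `0 < m < 2 ^ n`, then,
as real numbers, `M ≥ 2 ^ (2 ^ n / n - 1)`. -/
theorem common_multiple_of_odds_superexponential (n M : ℕ) (hn : 5 ≤ n) (hM : 1 ≤ M)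
    (h : ∀ m : ℕ, Odd m → 0 < m → m < 2 ^ n → m ∣ M) :
    (2 : ℝ) ^ ((2 : ℝ) ^ (n : ℕ) / (n : ℝ) - 1) ≤ (M : ℝ) := by
  have hM0 : M ≠ 0 := by omega
  set N : ℕ := 2 ^ (n - 1) with hN
  have h2N : 2 * N = 2 ^ n := by
    rw [hN, ← pow_succ']
    congr 1
    omega
  set C : ℕ := Nat.centralBinom N with hC
  -- C divides 2^n * M
  have hMdvd : M.factorization ≤ (2 ^ n * M).factorization :=
    (Nat.factorization_le_iff_dvd hM0 (by positivity)).mpr (dvd_mul_left M _)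
  have hdvd : C ∣ 2 ^ n * M := by
    rw [← Nat.factorization_le_iff_dvd (Nat.centralBinom_pos N).ne' (by positivity),
      Finsupp.le_def]
    intro p
    rw [← hC]
    by_cases hp : p.Prime
    · have hple : p ^ C.factorization p ≤ 2 * N := by
        rw [hC, Nat.centralBinom]
        exact Nat.pow_factorization_choose_le (by positivity)
      rw [h2N] at hple
      rcases eq_or_ne p 2 with rfl | hp2
      · have h1 : C.factorization 2 ≤ n := by
          by_contra hcon
          push_neg at hcon
          have h2 : (2:ℕ) ^ n < 2 ^ C.factorization 2 :=
            Nat.pow_lt_pow_right (by norm_num) hcon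
          omega
        have h3 : n ≤ (2 ^ n * M).factorization 2 := by
          have hd : (2:ℕ) ^ n ∣ 2 ^ n * M := dvd_mul_right _ _
          exact (Nat.Prime.pow_dvd_iff_le_factorization Nat.prime_two (by positivity)).mp hd
        omega
      · -- odd prime
        have hodd : Odd (p ^ C.factorization p) :=
          (hp.odd_of_ne_two hp2).pow
        have hlt : p ^ C.factorization p < 2 ^ n := by
          rcases lt_or_eq_of_le hple with h' | h'
          · exact h'
          · exfalso
            have heven : Even ((2:ℕ) ^ n) :=
              (Nat.even_pow).mpr ⟨even_two, by omega⟩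
            rw [h'] at hodd
            exact (Nat.not_even_iff_odd.mpr hodd) heven
        have hdvdM : p ^ C.factorization p ∣ M :=
          h _ hodd (pow_pos hp.pos _) hlt
        have hle : C.factorization p ≤ M.factorization p :=
          (Nat.Prime.pow_dvd_iff_le_factorization hp hM0).mp hdvdM
        exact le_trans hle (Finsupp.le_def.mp hMdvd p)
    · simp [Nat.factorization_eq_zero_of_not_prime _ hp]
  -- numeric bound: 2^(2^n) < N * C ≤ N * 2^n * M
  have hbin : 4 ^ N < N * C := Nat.four_pow_lt_mul_centralBinom N (by
    have : 2 ^ 2 ≤ 2 ^ (n-1) := Nat.pow_le_pow_right (by norm_num) (by omega)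
    simpa using this)
  have hCle : C ≤ 2 ^ n * M := Nat.le_of_dvd (by positivity) hdvd
  have key : 2 ^ (2 ^ n) ≤ 2 ^ (2 * n - 1) * M := by
    have h4 : (4 : ℕ) ^ N = 2 ^ (2 ^ n) := by
      rw [show (4:ℕ) = 2^2 by norm_num, ← pow_mul, ← h2N]
    have : 2 ^ (2 ^ n) < N * (2 ^ n * M) := by
      calc 2 ^ (2^n) = 4 ^ N := h4.symm
        _ < N * C := hbin
        _ ≤ N * (2 ^ n * M) := Nat.mul_le_mul_left N hCle
    have hNe : N * 2 ^ n = 2 ^ (2 * n - 1) := by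
      rw [hN, ← pow_add]
      congr 1
      omega
    calc 2 ^ (2^n) ≤ N * (2^n * M) := this.le
      _ = 2 ^ (2*n-1) * M := by rw [← mul_assoc, hNe]
  -- move to ℝ
  have hR : (2 : ℝ) ^ ((2:ℝ) ^ (n:ℕ) - (2 * (n:ℝ) - 1)) ≤ (M : ℝ) := by
    have hcast : ((2:ℕ) ^ (2^n) : ℝ) ≤ ((2:ℕ) ^ (2*n-1) : ℝ) * M := by
      exact_mod_cast key
    push_cast at hcast
    rw [Real.rpow_sub (by norm_num)]
    rw [div_le_iff₀ (by positivity)]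
    have e1 : (2:ℝ) ^ ((2:ℝ) ^ (n:ℕ)) = (2:ℝ) ^ (2^n : ℕ) := by
      rw [← Real.rpow_natCast 2 (2^n), Nat.cast_pow]
      norm_num
    have e2 : (2:ℝ) ^ (2 * (n:ℝ) - 1) = (2:ℝ) ^ (2*n - 1 : ℕ) := by
      rw [← Real.rpow_natCast 2 (2*n-1)]
      congr 1
      have : (1:ℕ) ≤ 2 * n := by omega
      push_cast [Nat.cast_sub this]
      ring
    rw [e1, e2]
    calc (2:ℝ) ^ (2^n : ℕ) ≤ (2:ℝ)^(2*n-1:ℕ) * M := by exact_mod_cast hcast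
      _ = M * 2^(2*n-1:ℕ) := by ring
  refine le_trans ?_ hR
  apply Real.rpow_le_rpow_of_exponent_le (by norm_num)
  -- 2^n / n - 1 ≤ 2^n - (2n - 1)
  have hn0 : (0:ℝ) < (n:ℝ) := by positivity
  rw [sub_le_iff_le_add, div_le_iff₀ hn0]
  have hsq : ((n:ℝ))^2 ≤ (2:ℝ)^(n:ℕ) := by
    have := sq_le_two_pow n hn
    exact_mod_cast this
  have hn5 : (5:ℝ) ≤ (n:ℝ) := by exact_mod_cast hn
  nlinarith [hsq, hn5, sq_nonneg ((n:ℝ) - 5)]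
end

section
/- Let n ≥ 5 and let M ≥ 1 be an integer such that for every odd integer m with 0 < m < 2^n there exist integers k ≥ 1 and m' with 0 < m' < 2^n satisfying M·2^n + m = k·m·2^n + m'. Then, as real numbers, M·2^n ≥ 2^n · 2^(2^n/n − 1); in particular the counter value M·2^n attained in any winning play of the game G_n is super-exponential in n. -/
private lemma four_mul_le_two_pow : ∀ n : ℕ, 4 ≤ n → 4 * n ≤ 2 ^ n := by
  intro n hn
  induction n with
  | zero => omega
  | succ k ih =>
    rcases Nat.lt_or_ge k 4 with hk | hk
    · have hk3 : k = 3 := by omega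
      subst hk3; norm_num
    · have h1 := ih hk
      have h4 : 4 ≤ 2 ^ k := le_trans (by omega) h1
      rw [pow_succ]
      omega

/-- Super-exponential counter values in the game `G_n`: if `n ≥ 5` and `M ≥ 1` is
such that for every odd `m` with `0 < m < 2 ^ n` Eve can win, i.e. there are `k ≥ 1`
and `0 < m' < 2 ^ n` with `M * 2 ^ n + m = k * m * 2 ^ n + m'`, then as real numbers
`M * 2 ^ n ≥ 2 ^ n * 2 ^ (2 ^ n / n - 1)`. -/
theorem game_counter_superexponential (n : ℕ) (hn : 5 ≤ n) (M : ℤ) (hM : 1 ≤ M)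
    (h : ∀ m : ℤ, Odd m → 0 < m → m < 2 ^ n →
      ∃ k m' : ℤ, 1 ≤ k ∧ 0 < m' ∧ m' < 2 ^ n ∧
        M * 2 ^ n + m = k * m * 2 ^ n + m') :
    (2 : ℝ) ^ (n : ℕ) * (2 : ℝ) ^ ((2 : ℝ) ^ (n : ℕ) / (n : ℝ) - 1) ≤
      (M : ℝ) * (2 : ℝ) ^ (n : ℕ) := by
  -- Step 1: every odd `m` with `0 < m < 2^n` divides `M` (over ℤ).
  have hdvdZ : ∀ m : ℤ, Odd m → 0 < m → m < 2 ^ n → m ∣ M := by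
    intro m hodd hm0 hmlt
    obtain ⟨k, m', hk, hm'0, hm'lt, heq⟩ := h m hodd hm0 hmlt
    have hdv : (2 : ℤ) ^ n ∣ (m - m') := ⟨k * m - M, by linarith⟩
    have hmm' : m = m' := by
      have h0 : m - m' = 0 :=
        Int.eq_zero_of_abs_lt_dvd hdv (abs_sub_lt_iff.2 ⟨by linarith, by linarith⟩)
      linarith
    subst hmm'
    have hpow : (2 : ℤ) ^ n ≠ 0 := by positivity
    have hMkm : M = k * m := by
      have : M * 2 ^ n = (k * m) * 2 ^ n := by linarith
      exact mul_right_cancel₀ hpow this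
    exact ⟨k, by rw [hMkm]; ring⟩
  -- Natural number version.
  set Mn : ℕ := M.toNat with hMn
  have hMcast : (Mn : ℤ) = M := Int.toNat_of_nonneg (by linarith)
  have hMnpos : 0 < Mn := by omega
  have hdvdN : ∀ m : ℕ, Odd m → 0 < m → m < 2 ^ n → m ∣ Mn := by
    intro m hodd hm0 hmlt
    have := hdvdZ (m : ℤ) (Int.odd_coe_nat m |>.2 hodd) (by exact_mod_cast hm0)
      (by exact_mod_cast hmlt)
    rw [← hMcast] at this
    exact_mod_cast this
  -- Step 3: every `0 < m < 2^n` divides `2^(n-1) * Mn`.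
  have hall : ∀ m : ℕ, 0 < m → m < 2 ^ n → m ∣ 2 ^ (n - 1) * Mn := by
    intro m hm0 hmlt
    have hm := Nat.ordProj_mul_ordCompl_eq_self m 2
    have hqodd : Odd (ordCompl[2] m) := by
      have h2 := Nat.not_dvd_ordCompl Nat.prime_two hm0.ne'
      exact Nat.odd_iff.2 (Nat.two_dvd_ne_zero.1 h2)
    have hqpos : 0 < ordCompl[2] m := Nat.ordCompl_pos 2 hm0.ne'
    have hqlt : ordCompl[2] m < 2 ^ n := lt_of_le_of_lt (Nat.ordCompl_le m 2) hmlt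
    have hqdvd : ordCompl[2] m ∣ Mn := hdvdN _ hqodd hqpos hqlt
    have hale : m.factorization 2 ≤ n - 1 := by
      have h1 : 2 ^ m.factorization 2 ≤ m := Nat.ordProj_le 2 hm0.ne'
      have h2 : 2 ^ m.factorization 2 < 2 ^ n := lt_of_le_of_lt h1 hmlt
      have := (Nat.pow_lt_pow_iff_right (a := 2) one_lt_two).1 h2
      omega
    calc m = 2 ^ m.factorization 2 * ordCompl[2] m := hm.symm
      _ ∣ 2 ^ (n - 1) * Mn := mul_dvd_mul (pow_dvd_pow 2 hale) hqdvd
  -- Step 4: the central binomial coefficient divides `2^(n-1) * Mn`.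
  set B : ℕ := 2 ^ (n - 1) - 1 with hB
  have hBpos : 4 ≤ B := by
    have : 2 ^ 4 ≤ 2 ^ (n - 1) := Nat.pow_le_pow_right (by norm_num) (by omega)
    omega
  have h2B : 2 * B = 2 ^ n - 2 := by
    have : 2 * 2 ^ (n - 1) = 2 ^ n := by
      rw [← pow_succ']
      congr 1
      omega
    omega
  have h2n4 : 4 ≤ 2 ^ n := by
    have : 2 ^ 2 ≤ 2 ^ n := Nat.pow_le_pow_right (by norm_num) (by omega)
    simpa using this
  have hDne : 2 ^ (n - 1) * Mn ≠ 0 := by positivity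
  have hcbdvd : Nat.centralBinom B ∣ 2 ^ (n - 1) * Mn := by
    rw [← Nat.factorization_le_iff_dvd (Nat.centralBinom_ne_zero B) hDne]
    intro p
    by_cases hp : p.Prime
    · have hle : (Nat.centralBinom B).factorization p ≤ Nat.log p (2 * B) :=
        Nat.factorization_choose_le_log
      have hpowle : p ^ Nat.log p (2 * B) ≤ 2 * B :=
        Nat.pow_log_le_self p (by omega)
      have hpowlt : p ^ Nat.log p (2 * B) < 2 ^ n := by omega
      have hpowpos : 0 < p ^ Nat.log p (2 * B) := pow_pos hp.pos _
      have hdv : p ^ Nat.log p (2 * B) ∣ 2 ^ (n - 1) * Mn := hall _ hpowpos hpowlt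
      have := (Nat.Prime.pow_dvd_iff_le_factorization hp hDne).1 hdv
      exact le_trans hle this
    · simp [Nat.factorization_eq_zero_of_not_prime _ hp]
  -- Step 5: `2^(2^n - 2*n) ≤ Mn`.
  have hMnbig : 2 ^ (2 ^ n - 2 * n) ≤ Mn := by
    have hcb : 4 ^ B < B * Nat.centralBinom B := Nat.four_pow_lt_mul_centralBinom B hBpos
    have hcble : Nat.centralBinom B ≤ 2 ^ (n - 1) * Mn :=
      Nat.le_of_dvd (by positivity) hcbdvd
    have hBle : B ≤ 2 ^ (n - 1) := by omega
    have hchain : 4 ^ B ≤ 2 ^ (n - 1) * (2 ^ (n - 1) * Mn) :=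
      le_trans hcb.le (Nat.mul_le_mul hBle hcble)
    have h4B : (4 : ℕ) ^ B = 2 ^ (2 * B) := by
      rw [show (4:ℕ) = 2 ^ 2 by norm_num, ← pow_mul, mul_comm]
    have hsplit : (2 : ℕ) ^ (2 * B) = 2 ^ (n - 1) * (2 ^ (n - 1) * 2 ^ (2 ^ n - 2 * n)) := by
      rw [← pow_add, ← pow_add]
      congr 1
      have h2nn : 2 * n ≤ 2 ^ n := by
        have := four_mul_le_two_pow n (by omega)
        omega
      omega
    have : 2 ^ (n - 1) * (2 ^ (n - 1) * 2 ^ (2 ^ n - 2 * n)) ≤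
        2 ^ (n - 1) * (2 ^ (n - 1) * Mn) := by
      rw [← hsplit, ← h4B]; exact hchain
    have h1 := Nat.le_of_mul_le_mul_left this (by positivity)
    exact Nat.le_of_mul_le_mul_left h1 (by positivity)
  -- Step 6: conclude over the reals.
  have hpow2pos : (0 : ℝ) < (2 : ℝ) ^ (n : ℕ) := by positivity
  rw [mul_comm ((2:ℝ) ^ (n:ℕ)) _]
  refine mul_le_mul_of_nonneg_right ?_ hpow2pos.le
  -- `2 ^ (2^n/n - 1) ≤ M` over ℝ.
  have hnR : (5 : ℝ) ≤ (n : ℝ) := by exact_mod_cast hn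
  have h4nR : 4 * (n : ℝ) ≤ (2 : ℝ) ^ (n : ℕ) := by
    exact_mod_cast four_mul_le_two_pow n (by omega)
  have hexp : (2 : ℝ) ^ (n : ℕ) / (n : ℝ) - 1 ≤ ((2 ^ n - 2 * n : ℕ) : ℝ) := by
    have h2nn : 2 * n ≤ 2 ^ n := by
      have := four_mul_le_two_pow n (by omega); omega
    have hcast : ((2 ^ n - 2 * n : ℕ) : ℝ) = (2 : ℝ) ^ (n : ℕ) - 2 * (n : ℝ) := by
      push_cast [Nat.cast_sub h2nn]
      ring
    rw [hcast, sub_le_iff_le_add, div_le_iff₀ (by linarith : (0:ℝ) < (n:ℝ))]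
    nlinarith [hpow2pos, sq_nonneg ((n:ℝ) - 5)]
  calc (2 : ℝ) ^ ((2 : ℝ) ^ (n : ℕ) / (n : ℝ) - 1)
      ≤ (2 : ℝ) ^ (((2 ^ n - 2 * n : ℕ) : ℝ)) :=
        Real.rpow_le_rpow_of_exponent_le one_le_two hexp
    _ = ((2 ^ (2 ^ n - 2 * n) : ℕ) : ℝ) := by
        rw [Real.rpow_natCast]; push_cast; ring
    _ ≤ (Mn : ℝ) := by exact_mod_cast hMnbig
    _ = (M : ℝ) := by exact_mod_cast congrArg (Int.cast : ℤ → ℝ) hMcast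
end
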